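/- Let G be the directed graph with vertex set {s, t} ∪ A ∪ B, edges s→a for a ∈ A, a→b for all a ∈ A, b ∈ B, and b→t for b ∈ B, all of weight 2. For any edge e of G, decreasing the weight of e by 1 (leaving other weights unchanged) makes every s-t path through e have weight 5 while every s-t path avoiding e has weight 6; hence every edge of G lies on the unique-distance-realizing set, so any subgraph preserving s-t distance under all single unit decrements must contain all |A| + |A|·|B| + |B| edges. -/

import Mathlib

variable {V : Type*}

/-- A directed walk in the digraph with edge set `E`, from `s` to `t`,
given as the list of visited vertices. -/
def IsWalk (E : Set (V × V)) (s t : V) (p : List V) : Prop :=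
  p.head? = some s ∧ p.getLast? = some t ∧ p.Chain' (fun a b => (a, b) ∈ E)

/-- The list of edges traversed by a walk. -/
def edgesOf (p : List V) : List (V × V) := p.zip p.tail

/-- Total weight of a walk. -/
def wt {α : Type*} [AddCommMonoid α] (w : V × V → α) (p : List V) : α :=
  ((edgesOf p).map w).sum

/-- `d` is the (attained) minimum weight of a directed `s`-`t` walk. -/
def IsDist {α : Type*} [AddCommMonoid α] [Preorder α] (E : Set (V × V)) (w : V × V → α)
    (s t : V) (d : α) : Prop :=
  (∃ p, IsWalk E s t p ∧ wt w p = d) ∧ ∀ p, IsWalk E s t p → d ≤ wt w p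

/-- In the three-layer graph `s → A → B → t` with all weights `2`, decreasing
any single edge `e` by one makes every `s`-`t` path through `e` have weight `5`
and every other `s`-`t` path weight `6`; hence any subgraph preserving the
`s`-`t` distance under all single unit decrements must contain every edge. -/
lemma walk_shape {s t : V} {A B : Finset V}
    (hst : s ≠ t) (hsA : s ∉ A) (hsB : s ∉ B) (htA : t ∉ A) (htB : t ∉ B)
    (hAB : Disjoint A B)
    {E : Set (V × V)}
    (hE : E = {p | (p.1 = s ∧ p.2 ∈ A) ∨ (p.1 ∈ A ∧ p.2 ∈ B) ∨ (p.1 ∈ B ∧ p.2 = t)})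
    {p : List V} (hp : IsWalk E s t p) :
    ∃ a ∈ A, ∃ b ∈ B, p = [s, a, b, t] := by
  have hab : ∀ x, x ∈ A → x ∈ B → False := fun x ha hb =>
    Finset.disjoint_left.mp hAB ha hb
  obtain ⟨h1, h2, h3⟩ := hp
  subst hE
  match p with
  | [] => simp at h1
  | [x] =>
    simp at h1 h2; subst h1; exact absurd h2 hst
  | [x, y] =>
    simp at h1 h2 h3; subst h1; subst h2
    rcases h3 with ⟨_, h⟩ | ⟨h, _⟩ | ⟨h, _⟩ <;> simp_all
  | [x, y, z] =>
    simp [List.Chain', List.isChain_cons_cons] at h1 h2 h3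
    subst h1; subst h2
    obtain ⟨hsy, hyt⟩ := h3
    have hy : y ∈ A := by rcases hsy with ⟨_, h⟩ | ⟨h, _⟩ | ⟨h, _⟩ <;> simp_all
    rcases hyt with ⟨h, _⟩ | ⟨_, h⟩ | ⟨h, _⟩
    · exact absurd (h ▸ hy) hsA
    · exact absurd h htB
    · exact hab y hy h |>.elim
  | x :: y :: z :: w :: rest =>
    simp at h1; subst h1
    simp only [List.Chain', List.isChain_cons_cons] at h3
    obtain ⟨hxy, hyz, hzw, h3'⟩ := h3
    have hy : y ∈ A := by rcases hxy with ⟨_, h⟩ | ⟨h, _⟩ | ⟨h, _⟩ <;> simp_all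
    have hz : z ∈ B := by
      rcases hyz with ⟨h, _⟩ | ⟨_, h⟩ | ⟨h, _⟩
      · exact absurd (h ▸ hy) hsA
      · exact h
      · exact (hab y hy h).elim
    have hw : w = t := by
      rcases hzw with ⟨h, _⟩ | ⟨h, _⟩ | ⟨_, h⟩
      · exact absurd (h ▸ hz) hsB
      · exact (hab z h hz).elim
      · exact h
    subst hw
    cases rest with
    | nil => exact ⟨y, hy, z, hz, rfl⟩
    | cons u rest' =>
      rw [List.isChain_cons_cons] at h3'
      rcases h3'.1 with ⟨h, _⟩ | ⟨h, _⟩ | ⟨h, _⟩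
      · exact absurd h.symm hst
      · exact absurd h htA
      · exact absurd h htB

theorem stmt12 [DecidableEq V] (s t : V) (A B : Finset V)
    (hA : A.Nonempty) (hB : B.Nonempty)
    (hst : s ≠ t) (hsA : s ∉ A) (hsB : s ∉ B) (htA : t ∉ A) (htB : t ∉ B)
    (hAB : Disjoint A B)
    (E : Set (V × V))
    (hE : E = {p | (p.1 = s ∧ p.2 ∈ A) ∨ (p.1 ∈ A ∧ p.2 ∈ B) ∨ (p.1 ∈ B ∧ p.2 = t)})
    (wdec : V × V → V × V → ℚ)
    (hwdec : wdec = fun e f => if f = e then 1 else 2) :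
    (∀ e ∈ E, ∀ p, IsWalk E s t p →
      (e ∈ edgesOf p → wt (wdec e) p = 5) ∧ (e ∉ edgesOf p → wt (wdec e) p = 6)) ∧
    (∀ E' ⊆ E, (∀ e ∈ E, ∃ p, IsWalk E' s t p ∧ wt (wdec e) p = 5) → E' = E) := by
  have part1 : ∀ e ∈ E, ∀ p, IsWalk E s t p →
      (e ∈ edgesOf p → wt (wdec e) p = 5) ∧ (e ∉ edgesOf p → wt (wdec e) p = 6) := by
    intro e he p hp
    obtain ⟨a, ha, b, hb, rfl⟩ := walk_shape hst hsA hsB htA htB hAB hE hp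
    have has : a ≠ s := fun h => hsA (h ▸ ha)
    have hbs : b ≠ s := fun h => hsB (h ▸ hb)
    have hat : a ≠ t := fun h => htA (h ▸ ha)
    have hbt : b ≠ t := fun h => htB (h ▸ hb)
    have hanb : a ≠ b := fun h => Finset.disjoint_left.mp hAB ha (h ▸ hb)
    constructor
    · intro hmem
      simp [edgesOf] at hmem
      rcases hmem with rfl | rfl | rfl <;>
        · simp [wt, edgesOf, hwdec, Prod.ext_iff, has, hbs, hat, hbt, hanb, hanb.symm,
            hst, hst.symm, has.symm, hbs.symm, hat.symm, hbt.symm]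
          norm_num
    · intro hmem
      simp [edgesOf, not_or] at hmem
      obtain ⟨h1, h2, h3⟩ := hmem
      simp [wt, edgesOf, hwdec, (Ne.symm h1 : _), (Ne.symm h2 : _), (Ne.symm h3 : _)]
      norm_num
  refine ⟨part1, ?_⟩
  intro E' hsub hall
  refine Set.Subset.antisymm hsub ?_
  intro e he
  obtain ⟨p, hp, hw⟩ := hall e he
  have hpE : IsWalk E s t p := ⟨hp.1, hp.2.1, hp.2.2.imp (fun a b h => hsub h)⟩
  obtain ⟨a, ha, b, hb, rfl⟩ := walk_shape hst hsA hsB htA htB hAB hE hpE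
  have hedges := hp.2.2
  simp only [List.Chain', List.isChain_cons_cons, List.isChain_singleton, and_true] at hedges
  obtain ⟨e1, e2, e3⟩ := hedges
  have hmem : e ∈ edgesOf [s, a, b, t] := by
    by_contra hne
    have := (part1 e he _ hpE).2 hne
    rw [this] at hw
    norm_num at hw
  simp [edgesOf] at hmem
  rcases hmem with rfl | rfl | rfl <;> assumption
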